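/- Let K be a field, let u, v ∈ K, let g ≥ 1 be an integer, and let a, b, c ∈ K be nonzero and pairwise distinct. Then the coefficient of x^{2g−2} in the formal power series (1+ux)^g (1+vx)^g (1−ax)^{−1} (1−bx)^{−1} (1−cx)^{−1} ∈ K[[x]] equals (a+u)^g (a+v)^g /((a−b)(a−c)) + (b+u)^g (b+v)^g /((b−a)(b−c)) + (c+u)^g (c+v)^g /((c−a)(c−b)). -/

import Mathlib

open Finset

private lemma geom_inv {K : Type*} [Field K] (a : K) :
    (1 - PowerSeries.C (R := K) a * PowerSeries.X)⁻¹ = PowerSeries.mk (fun n => a ^ n) := by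
  rw [PowerSeries.inv_eq_iff_mul_eq_one (by simp)]
  ext n
  rw [mul_sub, mul_one]
  cases n with
  | zero => simp
  | succ n =>
    have h : (PowerSeries.mk fun n => a ^ n) * (PowerSeries.C (R := K) a * PowerSeries.X)
        = PowerSeries.C (R := K) a * ((PowerSeries.mk fun n => a ^ n) * PowerSeries.X) := by ring
    rw [map_sub, h, PowerSeries.coeff_C_mul, PowerSeries.coeff_succ_mul_X]
    simp [pow_succ, mul_comm]

private lemma partial_fractions {K : Type*} [Field K] (a b c : K)
    (hab : a ≠ b) (hac : a ≠ c) (hbc : b ≠ c) :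
    (1 - PowerSeries.C (R := K) a * PowerSeries.X)⁻¹ *
      (1 - PowerSeries.C (R := K) b * PowerSeries.X)⁻¹ *
      (1 - PowerSeries.C (R := K) c * PowerSeries.X)⁻¹ =
    PowerSeries.C (R := K) (a ^ 2 / ((a - b) * (a - c))) * (1 - PowerSeries.C (R := K) a * PowerSeries.X)⁻¹ +
    PowerSeries.C (R := K) (b ^ 2 / ((b - a) * (b - c))) * (1 - PowerSeries.C (R := K) b * PowerSeries.X)⁻¹ +
    PowerSeries.C (R := K) (c ^ 2 / ((c - a) * (c - b))) * (1 - PowerSeries.C (R := K) c * PowerSeries.X)⁻¹ := by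
  have hab' : a - b ≠ 0 := sub_ne_zero.mpr hab
  have hac' : a - c ≠ 0 := sub_ne_zero.mpr hac
  have hbc' : b - c ≠ 0 := sub_ne_zero.mpr hbc
  have hba' : b - a ≠ 0 := sub_ne_zero.mpr hab.symm
  have hca' : c - a ≠ 0 := sub_ne_zero.mpr hac.symm
  have hcb' : c - b ≠ 0 := sub_ne_zero.mpr hbc.symm
  set A := a ^ 2 / ((a - b) * (a - c)) with hA
  set B := b ^ 2 / ((b - a) * (b - c)) with hB
  set Cc := c ^ 2 / ((c - a) * (c - b)) with hCc
  have ia : (1 - PowerSeries.C (R := K) a * PowerSeries.X)⁻¹ * (1 - PowerSeries.C (R := K) a * PowerSeries.X) = 1 :=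
    PowerSeries.inv_mul_cancel _ (by simp)
  have ib : (1 - PowerSeries.C (R := K) b * PowerSeries.X)⁻¹ * (1 - PowerSeries.C (R := K) b * PowerSeries.X) = 1 :=
    PowerSeries.inv_mul_cancel _ (by simp)
  have ic : (1 - PowerSeries.C (R := K) c * PowerSeries.X)⁻¹ * (1 - PowerSeries.C (R := K) c * PowerSeries.X) = 1 :=
    PowerSeries.inv_mul_cancel _ (by simp)
  rw [← PowerSeries.mul_inv_rev, ← PowerSeries.mul_inv_rev,
    PowerSeries.inv_eq_iff_mul_eq_one (by simp)]
  have h0 : A + B + Cc = 1 := by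
    rw [hA, hB, hCc]; field_simp; ring
  have h1 : A * (b + c) + B * (a + c) + Cc * (a + b) = 0 := by
    rw [hA, hB, hCc]; field_simp; ring
  have h2 : A * (b * c) + B * (a * c) + Cc * (a * b) = 0 := by
    rw [hA, hB, hCc]; field_simp; ring
  have H0 : PowerSeries.C (R := K) A + PowerSeries.C (R := K) B + PowerSeries.C (R := K) Cc = 1 := by
    rw [← map_add, ← map_add, h0, map_one]
  have H1 : PowerSeries.C (R := K) A * (PowerSeries.C (R := K) b + PowerSeries.C (R := K) c)
      + PowerSeries.C (R := K) B * (PowerSeries.C (R := K) a + PowerSeries.C (R := K) c)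
      + PowerSeries.C (R := K) Cc * (PowerSeries.C (R := K) a + PowerSeries.C (R := K) b) = 0 := by
    have := congrArg (PowerSeries.C (R := K)) h1
    simpa only [map_add, map_mul, map_zero] using this
  have H2 : PowerSeries.C (R := K) A * (PowerSeries.C (R := K) b * PowerSeries.C (R := K) c)
      + PowerSeries.C (R := K) B * (PowerSeries.C (R := K) a * PowerSeries.C (R := K) c)
      + PowerSeries.C (R := K) Cc * (PowerSeries.C (R := K) a * PowerSeries.C (R := K) b) = 0 := by
    have := congrArg (PowerSeries.C (R := K)) h2
    simpa only [map_add, map_mul, map_zero] using this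
  calc (PowerSeries.C (R := K) A * (1 - PowerSeries.C (R := K) a * PowerSeries.X)⁻¹ +
      PowerSeries.C (R := K) B * (1 - PowerSeries.C (R := K) b * PowerSeries.X)⁻¹ +
      PowerSeries.C (R := K) Cc * (1 - PowerSeries.C (R := K) c * PowerSeries.X)⁻¹) *
      ((1 - PowerSeries.C (R := K) c * PowerSeries.X) * ((1 - PowerSeries.C (R := K) b * PowerSeries.X) *
        (1 - PowerSeries.C (R := K) a * PowerSeries.X)))
      = PowerSeries.C (R := K) A * ((1 - PowerSeries.C (R := K) b * PowerSeries.X) *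
          (1 - PowerSeries.C (R := K) c * PowerSeries.X)) *
          ((1 - PowerSeries.C (R := K) a * PowerSeries.X)⁻¹ * (1 - PowerSeries.C (R := K) a * PowerSeries.X))
        + PowerSeries.C (R := K) B * ((1 - PowerSeries.C (R := K) a * PowerSeries.X) *
          (1 - PowerSeries.C (R := K) c * PowerSeries.X)) *
          ((1 - PowerSeries.C (R := K) b * PowerSeries.X)⁻¹ * (1 - PowerSeries.C (R := K) b * PowerSeries.X))
        + PowerSeries.C (R := K) Cc * ((1 - PowerSeries.C (R := K) a * PowerSeries.X) *
          (1 - PowerSeries.C (R := K) b * PowerSeries.X)) *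
          ((1 - PowerSeries.C (R := K) c * PowerSeries.X)⁻¹ * (1 - PowerSeries.C (R := K) c * PowerSeries.X)) := by ring
    _ = 1 := by
      rw [ia, ib, ic, mul_one, mul_one, mul_one]
      linear_combination H0 - PowerSeries.X * H1 + PowerSeries.X ^ 2 * H2

private lemma reflect_pow_aux {R : Type*} [CommSemiring R] (f : Polynomial R) (d : ℕ)
    (hf : f.natDegree ≤ d) : ∀ g : ℕ, (f ^ g).reflect (d * g) = (f.reflect d) ^ g
  | 0 => by simp [Polynomial.reflect_one]
  | g + 1 => by
    have h1 : (f ^ g).natDegree ≤ d * g :=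
      le_trans (Polynomial.natDegree_pow_le) (by nlinarith)
    rw [pow_succ, Nat.mul_succ, Polynomial.reflect_mul _ _ h1 hf,
      reflect_pow_aux f d hf g, pow_succ]

private lemma sum_coeff_pow_mul_pow {K : Type*} [Field K] (u v : K) (g : ℕ) (a : K) :
    ∑ i ∈ Finset.range (2 * g + 1),
      (PowerSeries.coeff (R := K) i ((1 + PowerSeries.C (R := K) u * PowerSeries.X) ^ g *
        (1 + PowerSeries.C (R := K) v * PowerSeries.X) ^ g)) * a ^ (2 * g - i)
      = (a + u) ^ g * (a + v) ^ g := by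
  set q : Polynomial K :=
    ((1 + Polynomial.C u * Polynomial.X) * (1 + Polynomial.C v * Polynomial.X)) ^ g with hq
  have hco : ((1 + PowerSeries.C (R := K) u * PowerSeries.X) ^ g *
        (1 + PowerSeries.C (R := K) v * PowerSeries.X) ^ g) = (q : PowerSeries K) := by
    rw [hq]
    simp only [Polynomial.coe_pow, Polynomial.coe_mul, Polynomial.coe_add, Polynomial.coe_one,
      Polynomial.coe_C, Polynomial.coe_X]
    rw [mul_pow]
  have hrefl : q.reflect (2 * g) =
      ((Polynomial.X + Polynomial.C u) * (Polynomial.X + Polynomial.C v)) ^ g := by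
    rw [hq, reflect_pow_aux _ 2 (by compute_degree) g]
    congr 1
    rw [show (2 : ℕ) = 1 + 1 from rfl,
      Polynomial.reflect_mul _ _ (by compute_degree) (by compute_degree)]
    simp [Polynomial.reflect_add, Polynomial.reflect_one, Polynomial.reflect_C_mul, add_comm]
  set r : Polynomial K := q.reflect (2 * g) with hrdef
  have hrdeg : r.natDegree < 2 * g + 1 := by
    rw [hrefl]
    refine Nat.lt_succ_of_le (le_trans Polynomial.natDegree_pow_le ?_)
    have : (((Polynomial.X + Polynomial.C u) * (Polynomial.X + Polynomial.C v)) : Polynomial K).natDegree ≤ 2 := by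
      compute_degree
    nlinarith
  calc ∑ i ∈ Finset.range (2 * g + 1),
      (PowerSeries.coeff (R := K) i ((1 + PowerSeries.C (R := K) u * PowerSeries.X) ^ g *
        (1 + PowerSeries.C (R := K) v * PowerSeries.X) ^ g)) * a ^ (2 * g - i)
      = ∑ i ∈ Finset.range (2 * g + 1), r.coeff (2 * g - i) * a ^ (2 * g - i) := by
        refine Finset.sum_congr rfl fun i hi => ?_
        rw [Finset.mem_range] at hi
        rw [hco, Polynomial.coeff_coe, hrdef, Polynomial.coeff_reflect,
          Polynomial.revAt_le (by omega)]
        congr 2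
        omega
    _ = ∑ i ∈ Finset.range (2 * g + 1), r.coeff i * a ^ i := by
        rw [← Finset.sum_range_reflect (fun i => r.coeff i * a ^ i) (2 * g + 1)]
        refine Finset.sum_congr rfl fun i hi => ?_
        rw [Finset.mem_range] at hi
        have h2 : 2 * g + 1 - 1 - i = 2 * g - i := by omega
        rw [h2]
    _ = r.eval a := (Polynomial.eval_eq_sum_range' hrdeg a).symm
    _ = (a + u) ^ g * (a + v) ^ g := by
        rw [hrefl]
        simp [Polynomial.eval_pow, Polynomial.eval_mul, mul_pow, add_comm]

set_option maxHeartbeats 1600000 in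
/-- Closed-form evaluation of the coefficient of `x^(2g-2)` in
`(1+ux)^g (1+vx)^g (1-ax)⁻¹ (1-bx)⁻¹ (1-cx)⁻¹ ∈ K⟦x⟧`
(the residue `F₁(a,b,c)` of the paper). -/
theorem coeff_two_g_sub_two_eq_residue_sum
    (K : Type*) [Field K] (u v : K) (g : ℕ) (hg : 1 ≤ g)
    (a b c : K) (ha : a ≠ 0) (hb : b ≠ 0) (hc : c ≠ 0)
    (hab : a ≠ b) (hac : a ≠ c) (hbc : b ≠ c) :
    PowerSeries.coeff (R := K) (2 * g - 2)
      ((1 + PowerSeries.C (R := K) u * PowerSeries.X) ^ g *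
        (1 + PowerSeries.C (R := K) v * PowerSeries.X) ^ g *
        (1 - PowerSeries.C (R := K) a * PowerSeries.X)⁻¹ *
        (1 - PowerSeries.C (R := K) b * PowerSeries.X)⁻¹ *
        (1 - PowerSeries.C (R := K) c * PowerSeries.X)⁻¹) =
      (a + u) ^ g * (a + v) ^ g / ((a - b) * (a - c)) +
      (b + u) ^ g * (b + v) ^ g / ((b - a) * (b - c)) +
      (c + u) ^ g * (c + v) ^ g / ((c - a) * (c - b)) := by
  have hab' : a - b ≠ 0 := sub_ne_zero.mpr hab
  have hac' : a - c ≠ 0 := sub_ne_zero.mpr hac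
  have hbc' : b - c ≠ 0 := sub_ne_zero.mpr hbc
  have hba' : b - a ≠ 0 := sub_ne_zero.mpr hab.symm
  have hca' : c - a ≠ 0 := sub_ne_zero.mpr hac.symm
  have hcb' : c - b ≠ 0 := sub_ne_zero.mpr hbc.symm
  set P : PowerSeries K := (1 + PowerSeries.C (R := K) u * PowerSeries.X) ^ g *
    (1 + PowerSeries.C (R := K) v * PowerSeries.X) ^ g with hP
  have key : ∀ x : K, x ≠ 0 →
      PowerSeries.coeff (R := K) (2 * g - 2) (P * PowerSeries.mk (fun n => x ^ n)) =
      ((x + u) ^ g * (x + v) ^ g - x * PowerSeries.coeff (R := K) (2 * g - 1) P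
        - PowerSeries.coeff (R := K) (2 * g) P) / x ^ 2 := by
    intro x hx
    rw [eq_div_iff (pow_ne_zero 2 hx), PowerSeries.coeff_mul,
      Finset.Nat.sum_antidiagonal_eq_sum_range_succ_mk]
    simp only [PowerSeries.coeff_mk]
    have hsum := sum_coeff_pow_mul_pow u v g x
    rw [← hP] at hsum
    have hsplit : ∑ i ∈ Finset.range (2 * g + 1), PowerSeries.coeff (R := K) i P * x ^ (2 * g - i)
        = (∑ i ∈ Finset.range (2 * g - 1), PowerSeries.coeff (R := K) i P * x ^ (2 * g - i))
          + PowerSeries.coeff (R := K) (2 * g - 1) P * x + PowerSeries.coeff (R := K) (2 * g) P := by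
      have h1 : 2 * g + 1 = (2 * g - 1) + 1 + 1 := by omega
      rw [h1, Finset.sum_range_succ, Finset.sum_range_succ]
      have e1 : 2 * g - (2 * g - 1) = 1 := by omega
      have e2 : (2 * g - 1) + 1 = 2 * g := by omega
      rw [e2, e1, pow_one, Nat.sub_self, pow_zero, mul_one]
    rw [← hsum, hsplit]
    have e3 : 2 * g - 2 + 1 = 2 * g - 1 := by omega
    rw [Nat.succ_eq_add_one, e3, Finset.sum_mul]
    have hcg : ∀ i ∈ Finset.range (2 * g - 1),
        PowerSeries.coeff (R := K) i P * x ^ (2 * g - 2 - i) * x ^ 2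
          = PowerSeries.coeff (R := K) i P * x ^ (2 * g - i) := by
      intro i hi
      rw [Finset.mem_range] at hi
      rw [mul_assoc, ← pow_add]
      congr 2
      omega
    rw [Finset.sum_congr rfl hcg]
    ring
  have expand : P *
        (1 - PowerSeries.C (R := K) a * PowerSeries.X)⁻¹ *
        (1 - PowerSeries.C (R := K) b * PowerSeries.X)⁻¹ *
        (1 - PowerSeries.C (R := K) c * PowerSeries.X)⁻¹
      = PowerSeries.C (R := K) (a ^ 2 / ((a - b) * (a - c))) * (P * PowerSeries.mk (fun n => a ^ n))
        + PowerSeries.C (R := K) (b ^ 2 / ((b - a) * (b - c))) * (P * PowerSeries.mk (fun n => b ^ n))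
        + PowerSeries.C (R := K) (c ^ 2 / ((c - a) * (c - b))) * (P * PowerSeries.mk (fun n => c ^ n)) := by
    calc P * (1 - PowerSeries.C (R := K) a * PowerSeries.X)⁻¹ *
        (1 - PowerSeries.C (R := K) b * PowerSeries.X)⁻¹ *
        (1 - PowerSeries.C (R := K) c * PowerSeries.X)⁻¹
        = P * ((1 - PowerSeries.C (R := K) a * PowerSeries.X)⁻¹ *
            (1 - PowerSeries.C (R := K) b * PowerSeries.X)⁻¹ *
            (1 - PowerSeries.C (R := K) c * PowerSeries.X)⁻¹) := by ring
      _ = P * (PowerSeries.C (R := K) (a ^ 2 / ((a - b) * (a - c))) * (1 - PowerSeries.C (R := K) a * PowerSeries.X)⁻¹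
            + PowerSeries.C (R := K) (b ^ 2 / ((b - a) * (b - c))) * (1 - PowerSeries.C (R := K) b * PowerSeries.X)⁻¹
            + PowerSeries.C (R := K) (c ^ 2 / ((c - a) * (c - b))) * (1 - PowerSeries.C (R := K) c * PowerSeries.X)⁻¹) := by
          rw [partial_fractions a b c hab hac hbc]
      _ = PowerSeries.C (R := K) (a ^ 2 / ((a - b) * (a - c))) * (P * (1 - PowerSeries.C (R := K) a * PowerSeries.X)⁻¹)
            + PowerSeries.C (R := K) (b ^ 2 / ((b - a) * (b - c))) * (P * (1 - PowerSeries.C (R := K) b * PowerSeries.X)⁻¹)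
            + PowerSeries.C (R := K) (c ^ 2 / ((c - a) * (c - b))) * (P * (1 - PowerSeries.C (R := K) c * PowerSeries.X)⁻¹) := by
          ring
      _ = _ := by rw [geom_inv a, geom_inv b, geom_inv c]
  rw [expand, map_add, map_add, PowerSeries.coeff_C_mul, PowerSeries.coeff_C_mul,
    PowerSeries.coeff_C_mul, key a ha, key b hb, key c hc]
  set p1 := PowerSeries.coeff (R := K) (2 * g - 1) P with hp1
  set p0 := PowerSeries.coeff (R := K) (2 * g) P with hp0
  have t1 : a ^ 2 / ((a - b) * (a - c)) * (((a + u) ^ g * (a + v) ^ g - a * p1 - p0) / a ^ 2)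
      = ((a + u) ^ g * (a + v) ^ g - a * p1 - p0) / ((a - b) * (a - c)) := by
    rw [div_mul_div_comm, mul_comm (a ^ 2), mul_div_mul_right _ _ (pow_ne_zero 2 ha)]
  have t2 : b ^ 2 / ((b - a) * (b - c)) * (((b + u) ^ g * (b + v) ^ g - b * p1 - p0) / b ^ 2)
      = ((b + u) ^ g * (b + v) ^ g - b * p1 - p0) / ((b - a) * (b - c)) := by
    rw [div_mul_div_comm, mul_comm (b ^ 2), mul_div_mul_right _ _ (pow_ne_zero 2 hb)]
  have t3 : c ^ 2 / ((c - a) * (c - b)) * (((c + u) ^ g * (c + v) ^ g - c * p1 - p0) / c ^ 2)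
      = ((c + u) ^ g * (c + v) ^ g - c * p1 - p0) / ((c - a) * (c - b)) := by
    rw [div_mul_div_comm, mul_comm (c ^ 2), mul_div_mul_right _ _ (pow_ne_zero 2 hc)]
  rw [t1, t2, t3]
  have hzero : (a * p1 + p0) / ((a - b) * (a - c)) + (b * p1 + p0) / ((b - a) * (b - c))
      + (c * p1 + p0) / ((c - a) * (c - b)) = 0 := by
    field_simp
    ring
  linear_combination -hzero
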